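/- Let X_1, Y_1, ..., X_n, Y_n be i.i.d. standard Gaussians. Then for any ε > 0, P(|(1/n)∑_{i=1}^n X_i Y_i| > ε/2) ≤ 2·exp(-n·ε·min(1,ε)/10). -/

import Mathlib

open MeasureTheory ProbabilityTheory Real

lemma exp_quad_eq {b : ℝ} (c : ℝ) (hb : 0 < b) (x : ℝ) :
    rexp (-b*x^2 + c*x) = rexp (c^2/(4*b)) * rexp (-b*(x - c/(2*b))^2) := by
  rw [← Real.exp_add]
  congr 1
  field_simp
  ring

lemma integrable_quad {b : ℝ} (c : ℝ) (hb : 0 < b) :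
    Integrable (fun x => rexp (-b*x^2 + c*x)) := by
  simp_rw [exp_quad_eq c hb]
  exact ((integrable_exp_neg_mul_sq hb).comp_sub_right (c/(2*b))).const_mul _

lemma integral_quad {b : ℝ} (c : ℝ) (hb : 0 < b) :
    ∫ x, rexp (-b*x^2 + c*x) = rexp (c^2/(4*b)) * Real.sqrt (π/b) := by
  simp_rw [exp_quad_eq c hb]
  rw [integral_const_mul,
    integral_sub_right_eq_self (fun x => rexp (-b*x^2)) (c/(2*b)), integral_gaussian]

lemma integral_gaussianReal_eq (g : ℝ → ℝ) :
    ∫ x, g x ∂(gaussianReal 0 1) = ∫ x, gaussianPDFReal 0 1 x * g x := by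
  rw [gaussianReal_of_var_ne_zero 0 one_ne_zero, gaussianPDF_def]
  have hm : Measurable (fun x => (gaussianPDFReal 0 1 x).toNNReal) :=
    (measurable_gaussianPDFReal 0 1).real_toNNReal
  simp only [ENNReal.ofReal]
  rw [integral_withDensity_eq_integral_smul hm g]
  congr 1
  ext x
  simp [NNReal.smul_def, Real.coe_toNNReal _ (gaussianPDFReal_nonneg 0 1 x)]

lemma integrable_gaussianReal_iff (g : ℝ → ℝ) :
    Integrable g (gaussianReal 0 1) ↔ Integrable (fun x => gaussianPDFReal 0 1 x * g x) := by
  rw [gaussianReal_of_var_ne_zero 0 one_ne_zero, gaussianPDF_def]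
  have hm : Measurable (fun x => (gaussianPDFReal 0 1 x).toNNReal) :=
    (measurable_gaussianPDFReal 0 1).real_toNNReal
  simp only [ENNReal.ofReal]
  rw [integrable_withDensity_iff_integrable_smul hm]
  apply integrable_congr
  filter_upwards with x
  simp [NNReal.smul_def, Real.coe_toNNReal _ (gaussianPDFReal_nonneg 0 1 x)]

lemma pdf_mul_eq (c a : ℝ) (x : ℝ) :
    gaussianPDFReal 0 1 x * rexp (c*x^2 + a*x)
      = (Real.sqrt (2*π))⁻¹ * rexp (-(1/2-c)*x^2 + a*x) := by
  simp only [gaussianPDFReal, NNReal.coe_one, mul_one, sub_zero]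
  rw [mul_assoc, ← Real.exp_add]
  congr 1
  ring

lemma gauss_quad_int (c a : ℝ) (hc : c < 1/2) :
    Integrable (fun x => rexp (c*x^2 + a*x)) (gaussianReal 0 1) := by
  rw [integrable_gaussianReal_iff]
  simp_rw [pdf_mul_eq c a]
  exact (integrable_quad a (by linarith)).const_mul _

lemma gauss_quad_val (c a : ℝ) (hc : c < 1/2) :
    ∫ x, rexp (c*x^2 + a*x) ∂(gaussianReal 0 1)
      = rexp (a^2/(2*(1-2*c))) * (Real.sqrt (1-2*c))⁻¹ := by
  have hb : 0 < 1/2 - c := by linarith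
  rw [integral_gaussianReal_eq]
  simp_rw [pdf_mul_eq c a]
  rw [integral_const_mul, integral_quad a hb]
  have h1 : a^2/(4*(1/2-c)) = a^2/(2*(1-2*c)) := by congr 1; ring
  rw [h1]
  have h2 : (Real.sqrt (2*π))⁻¹ * Real.sqrt (π/(1/2-c)) = (Real.sqrt (1-2*c))⁻¹ := by
    have hπ : (0:ℝ) < π := Real.pi_pos
    rw [← Real.sqrt_inv, ← Real.sqrt_inv (1-2*c), ← Real.sqrt_mul (by positivity)]
    congr 1
    have h1 : π ≠ 0 := ne_of_gt hπ
    have h2 : (1/2 - c) ≠ 0 := ne_of_gt hb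
    have h3 : (1 - 2*c) ≠ 0 := ne_of_gt (by linarith)
    field_simp
  calc (Real.sqrt (2*π))⁻¹ * (rexp (a^2/(2*(1-2*c))) * Real.sqrt (π/(1/2-c)))
      = rexp (a^2/(2*(1-2*c))) * ((Real.sqrt (2*π))⁻¹ * Real.sqrt (π/(1/2-c))) := by ring
    _ = _ := by rw [h2]

lemma gauss_lin_int (a : ℝ) : Integrable (fun y => rexp (a*y)) (gaussianReal 0 1) := by
  have := gauss_quad_int 0 a (by norm_num)
  simpa using this

lemma gauss_lin_val (a : ℝ) : ∫ y, rexp (a*y) ∂(gaussianReal 0 1) = rexp (a^2/2) := by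
  have := gauss_quad_val 0 a (by norm_num)
  simpa using this

lemma gauss_sq_int (c : ℝ) (hc : c < 1/2) :
    Integrable (fun x => rexp (c*x^2)) (gaussianReal 0 1) := by
  have := gauss_quad_int c 0 hc
  simpa using this

lemma gauss_sq_val (c : ℝ) (hc : c < 1/2) :
    ∫ x, rexp (c*x^2) ∂(gaussianReal 0 1) = (Real.sqrt (1-2*c))⁻¹ := by
  have := gauss_quad_val c 0 hc
  simpa using this

noncomputable def ν : Measure (ℝ × ℝ) := (gaussianReal 0 1).prod (gaussianReal 0 1)

lemma prod_mgf_int (t : ℝ) (ht : t^2 < 1) :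
    Integrable (fun p : ℝ × ℝ => rexp (t * (p.1 * p.2))) ν := by
  have hmeas : AEStronglyMeasurable (fun p : ℝ × ℝ => rexp (t * (p.1 * p.2))) ν :=
    (Continuous.aestronglyMeasurable (by fun_prop))
  rw [ν, integrable_prod_iff hmeas]
  constructor
  · filter_upwards with x
    have := gauss_lin_int (t*x)
    apply this.congr
    filter_upwards with y
    ring_nf
  · have h2 : (fun x => ∫ y, ‖rexp (t * (x * y))‖ ∂(gaussianReal 0 1))
        = fun x => rexp ((t^2/2)*x^2) := by
      ext x
      simp only [Real.norm_eq_abs, abs_of_pos (Real.exp_pos _)]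
      have h3 : ∫ y, rexp (t * (x * y)) ∂(gaussianReal 0 1) = rexp ((t*x)^2/2) := by
        rw [← gauss_lin_val (t*x)]
        congr 1; ext y; ring_nf
      rw [h3]; congr 1; ring
    rw [h2]
    exact gauss_sq_int _ (by nlinarith)

lemma prod_mgf_val (t : ℝ) (ht : t^2 < 1) :
    ∫ p, rexp (t * (p.1 * p.2)) ∂ν = (Real.sqrt (1 - t^2))⁻¹ := by
  rw [ν, MeasureTheory.integral_prod _ (prod_mgf_int t ht)]
  have h1 : ∀ x : ℝ, ∫ y, rexp (t * (x * y)) ∂(gaussianReal 0 1) = rexp ((t^2/2)*x^2) := by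
    intro x
    have h3 : ∫ y, rexp (t * (x * y)) ∂(gaussianReal 0 1) = rexp ((t*x)^2/2) := by
      rw [← gauss_lin_val (t*x)]
      congr 1; ext y; ring_nf
    rw [h3]; congr 1; ring
  simp_rw [h1]
  rw [gauss_sq_val _ (by nlinarith)]
  norm_num
  congr 1
  ring


instance : IsProbabilityMeasure ν := by rw [ν]; infer_instance

section nfold
variable (n : ℕ)

noncomputable local instance : MeasureSpace (ℝ × ℝ) := ⟨ν⟩

local instance : SigmaFinite (volume : Measure (ℝ × ℝ)) := by
  show SigmaFinite ν; infer_instance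

lemma sum_mgf_int (t : ℝ) (ht : t^2 < 1) :
    Integrable (fun ω : Fin n → ℝ × ℝ => rexp (t * ∑ i, (ω i).1 * (ω i).2))
      (Measure.pi fun _ => ν) := by
  have h := MeasureTheory.Integrable.fintype_prod (𝕜 := ℝ) (ι := Fin n) (E := ℝ × ℝ)
    (f := fun _ p => rexp (t * (p.1 * p.2))) (fun _ => prod_mgf_int t ht)
  have hvol : (volume : Measure (Fin n → ℝ × ℝ)) = Measure.pi fun _ => ν := rfl
  apply h.congr
  filter_upwards with ω
  rw [← Real.exp_sum, Finset.mul_sum]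

lemma sum_mgf_val (t : ℝ) (ht : t^2 < 1) :
    ∫ ω : Fin n → ℝ × ℝ, rexp (t * ∑ i, (ω i).1 * (ω i).2) ∂(Measure.pi fun _ => ν)
      = ((Real.sqrt (1 - t^2))⁻¹)^n := by
  have h := MeasureTheory.integral_fintype_prod_eq_pow (𝕜 := ℝ) (E := ℝ × ℝ) (ι := Fin n) (μ := ν)
    (f := fun p => rexp (t * (p.1 * p.2)))
  simp only [Fintype.card_fin] at h
  have hvol : (volume : Measure (Fin n → ℝ × ℝ)) = Measure.pi fun _ => ν := rfl
  have hν : (volume : Measure (ℝ × ℝ)) = ν := rfl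
  rw [prod_mgf_val t ht] at h
  rw [← h]
  congr 1
  ext ω
  rw [← Real.exp_sum, Finset.mul_sum]

end nfold



set_option maxHeartbeats 2000000 in
/-- If `X_1, Y_1, ..., X_n, Y_n` are i.i.d. standard Gaussians, then for any `ε > 0`,
`P(|(1/n) ∑ X_i Y_i| > ε/2) ≤ 2 exp(-n ε min(1,ε)/10)`. -/
theorem prod_gaussian_mean_tail (n : ℕ) (hn : 0 < n) (ε : ℝ) (hε : 0 < ε) :
    (Measure.pi fun _ : Fin n => (gaussianReal 0 1).prod (gaussianReal 0 1))
      {ω | ε / 2 < |(1 / n : ℝ) * ∑ i, (ω i).1 * (ω i).2|}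
    ≤ ENNReal.ofReal (2 * Real.exp (-(n * ε * min 1 ε) / 10)) := by
  have hνeq : (gaussianReal 0 1).prod (gaussianReal 0 1) = ν := rfl
  rw [hνeq]
  set μpi := Measure.pi fun _ : Fin n => ν with hμpi
  haveI : IsProbabilityMeasure μpi := by rw [hμpi]; infer_instance
  set S := fun ω : Fin n → ℝ × ℝ => ∑ i, (ω i).1 * (ω i).2 with hS
  set m := min 1 ε with hm
  set v := Real.sqrt (1+ε^2) - 1 with hv
  have hsq : (v+1)^2 = 1+ε^2 := by
    rw [hv, sub_add_cancel]; exact Real.sq_sqrt (by positivity)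
  have hvnn : 0 ≤ v := by
    rw [hv]
    have h := Real.sqrt_le_sqrt (show (1:ℝ) ≤ 1+ε^2 by nlinarith)
    rw [Real.sqrt_one] at h; linarith
  have hε2 : v^2 + 2*v = ε^2 := by nlinarith [hsq]
  have hv0 : 0 < v := by nlinarith
  set t := v/ε with htdef
  have ht0 : 0 < t := div_pos hv0 hε
  have htε : t*ε = v := by rw [htdef]; field_simp
  have ht2 : t^2 < 1 := by
    rw [htdef, div_pow, div_lt_one (by positivity)]; nlinarith
  have h1t : 0 < 1 - t^2 := by linarith
  have hm0 : 0 < m := lt_min one_pos hε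
  have keyv : 2*ε*m/5 ≤ v := by
    rcases le_total ε 1 with h|h
    · rw [hm, min_eq_right h]
      have hvhalf : v ≤ 1/2 := by nlinarith [hε2, hv0]
      nlinarith [hε2, hvhalf, hv0]
    · rw [hm, min_eq_left h]; nlinarith [hε2, hv0]
  have hsqrt : (Real.sqrt (1-t^2))⁻¹ ≤ rexp (v/2 - ε*m/10) := by
    have hinv : (1-t^2)⁻¹ = 1 + v/2 := by
      have h1teq : (1 - t^2) = 2/(v+2) := by
        rw [htdef, div_pow, eq_div_iff (by linarith)]
        field_simp
        nlinarith [hε2]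
      rw [h1teq, inv_div]; ring
    have h5 : (Real.sqrt (1-t^2))⁻¹ = Real.sqrt (1 + v/2) := by
      rw [← Real.sqrt_inv, hinv]
    rw [h5]
    have h6 : 1 + v/2 ≤ rexp (v/2) := by nlinarith [Real.add_one_le_exp (v/2)]
    have h8 : Real.sqrt (rexp (v/2)) = rexp (v/4) := by
      rw [show rexp (v/2) = rexp (v/4) * rexp (v/4) by rw [← Real.exp_add]; ring_nf]
      exact Real.sqrt_mul_self (Real.exp_pos _).le
    calc Real.sqrt (1+v/2) ≤ Real.sqrt (rexp (v/2)) := Real.sqrt_le_sqrt h6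
      _ = rexp (v/4) := h8
      _ ≤ rexp (v/2 - ε*m/10) := by
          apply Real.exp_le_exp.mpr; linarith
  have hBound : rexp (-t * ((n:ℝ)*ε/2)) * ((Real.sqrt (1-t^2))⁻¹)^n
      ≤ rexp (-((n:ℝ)*ε*m)/10) := by
    have hp : ((Real.sqrt (1-t^2))⁻¹)^n ≤ (rexp (v/2 - ε*m/10))^n :=
      pow_le_pow_left₀ (by positivity) hsqrt n
    have heq : rexp (-t * ((n:ℝ)*ε/2)) * (rexp (v/2 - ε*m/10))^n
        = rexp (-((n:ℝ)*ε*m)/10) := by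
      rw [← Real.exp_nat_mul, ← Real.exp_add]
      congr 1
      have h9 : -t * ((n:ℝ)*ε/2) = -((n:ℝ)*(t*ε)/2) := by ring
      rw [h9, htε]; ring
    calc rexp (-t * ((n:ℝ)*ε/2)) * ((Real.sqrt (1-t^2))⁻¹)^n
        ≤ rexp (-t * ((n:ℝ)*ε/2)) * (rexp (v/2 - ε*m/10))^n :=
          mul_le_mul_of_nonneg_left hp (Real.exp_pos _).le
      _ = rexp (-((n:ℝ)*ε*m)/10) := heq
  have hmgf : ∀ s : ℝ, s^2 < 1 → mgf S μpi s = ((Real.sqrt (1-s^2))⁻¹)^n := by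
    intro s hs
    rw [mgf]
    exact sum_mgf_val n s hs
  have hA := measure_ge_le_exp_mul_mgf (μ := μpi) (X := S) ((n:ℝ)*ε/2) ht0.le
    (sum_mgf_int n t ht2)
  rw [hmgf t ht2] at hA
  have hnt2 : (-t)^2 < 1 := by rw [neg_sq]; exact ht2
  have hB := measure_le_le_exp_mul_mgf (μ := μpi) (X := S) (-((n:ℝ)*ε/2))
    (neg_nonpos.mpr ht0.le) (sum_mgf_int n (-t) hnt2)
  rw [hmgf (-t) hnt2] at hB
  rw [neg_sq] at hB
  rw [show -(-t) * -((n:ℝ)*ε/2) = -t * ((n:ℝ)*ε/2) by ring] at hB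
  have hsub : {ω | ε/2 < |(1/(n:ℝ)) * S ω|}
      ⊆ {ω | (n:ℝ)*ε/2 ≤ S ω} ∪ {ω | S ω ≤ -((n:ℝ)*ε/2)} := by
    intro ω hω
    simp only [Set.mem_setOf_eq, Set.mem_union] at hω ⊢
    have hn' : (0:ℝ) < n := by exact_mod_cast hn
    rw [abs_mul, abs_of_pos (by positivity : (0:ℝ) < 1/(n:ℝ)), one_div,
      inv_mul_eq_div, lt_div_iff₀ hn'] at hω
    have habs : (n:ℝ)*ε/2 < |S ω| := by linarith
    rcases lt_abs.mp habs with h|h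
    · left; linarith
    · right; linarith
  have hendA : μpi {ω | (n:ℝ)*ε/2 ≤ S ω} ≤ ENNReal.ofReal (rexp (-((n:ℝ)*ε*m)/10)) := by
    rw [ENNReal.le_ofReal_iff_toReal_le (measure_ne_top _ _) (Real.exp_pos _).le]
    exact hA.trans hBound
  have hendB : μpi {ω | S ω ≤ -((n:ℝ)*ε/2)} ≤ ENNReal.ofReal (rexp (-((n:ℝ)*ε*m)/10)) := by
    rw [ENNReal.le_ofReal_iff_toReal_le (measure_ne_top _ _) (Real.exp_pos _).le]
    exact hB.trans hBound
  show μpi {ω | ε/2 < |(1/(n:ℝ)) * S ω|} ≤ ENNReal.ofReal (2 * rexp (-((n:ℝ)*ε*m)/10))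
  calc μpi {ω | ε/2 < |(1/(n:ℝ)) * S ω|}
      ≤ μpi ({ω | (n:ℝ)*ε/2 ≤ S ω} ∪ {ω | S ω ≤ -((n:ℝ)*ε/2)}) := measure_mono hsub
    _ ≤ μpi {ω | (n:ℝ)*ε/2 ≤ S ω} + μpi {ω | S ω ≤ -((n:ℝ)*ε/2)} := measure_union_le _ _
    _ ≤ ENNReal.ofReal (rexp (-((n:ℝ)*ε*m)/10))
        + ENNReal.ofReal (rexp (-((n:ℝ)*ε*m)/10)) := add_le_add hendA hendB
    _ = ENNReal.ofReal (2 * rexp (-((n:ℝ)*ε*m)/10)) := by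
        rw [← ENNReal.ofReal_add (Real.exp_pos _).le (Real.exp_pos _).le]
        congr 1; ring
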